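/- Let p be an odd prime and m, n₁ positive integers, and set n = 2^m·p^{n₁}. Then the unit graph G(Z_n) has n vertices and exactly 2^{m-1}·p^{n₁}·φ(n) edges, its minimum degree equals φ(n), and its edge connectivity equals φ(n); that is, there exists a set of φ(n) edges whose deletion leaves a graph that is not connected, while deleting any set of fewer than φ(n) edges leaves a connected graph. -/

import Mathlib

/-- The unit graph of `ZMod m`: distinct vertices `x, y` are adjacent iff `x + y` is a unit. -/
def unitGraph (m : ℕ) : SimpleGraph (ZMod m) where
  Adj x y := x ≠ y ∧ IsUnit (x + y)
  symm := by
    constructor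
    intro x y h
    exact ⟨h.1.symm, by rw [add_comm]; exact h.2⟩
  loopless := by
    constructor
    intro x h
    exact h.1 rfl

open Finset SimpleGraph

instance zmodIsUnitDec : ∀ {n : ℕ} (z : ZMod n), Decidable (IsUnit z)
  | 0, z => decidable_of_iff (z = 1 ∨ z = -1) Int.isUnit_iff.symm
  | (_ + 1), _ => inferInstance

instance unitGraphAdjDec (n : ℕ) : DecidableRel (unitGraph n).Adj :=
  fun x y => decidable_of_iff (x ≠ y ∧ IsUnit (x + y)) Iff.rfl


section Helpers
variable {n : ℕ} [NeZero n]

lemma val_add_mod_two (h2 : 2 ∣ n) (x y : ZMod n) :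
    (x + y).val % 2 = (x.val + y.val) % 2 := by
  rw [ZMod.val_add, Nat.mod_mod_of_dvd _ h2]

omit [NeZero n] in
lemma isUnit_val_odd (h2 : 2 ∣ n) {z : ZMod n} (hz : IsUnit z) : z.val % 2 = 1 := by
  have hc : Nat.Coprime z.val n := by
    obtain ⟨u, rfl⟩ := hz
    exact ZMod.val_coe_unit_coprime u
  rcases Nat.even_or_odd z.val with he | ho
  · exact absurd (hc ▸ Nat.dvd_gcd he.two_dvd h2) (by norm_num)
  · rw [Nat.odd_iff] at ho; exact ho

lemma adj_parity (h2 : 2 ∣ n) {x y : ZMod n} (h : (unitGraph n).Adj x y) :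
    x.val % 2 + y.val % 2 = 1 := by
  have h1 := isUnit_val_odd h2 h.2
  have h2' := val_add_mod_two h2 x y
  omega

lemma not_isUnit_add_self (h2 : 2 ∣ n) (x : ZMod n) : ¬ IsUnit (x + x) := by
  intro h
  have h1 := isUnit_val_odd h2 h
  have h2' := val_add_mod_two h2 x x
  omega

lemma card_isUnit : #(univ.filter (fun z : ZMod n => IsUnit z)) = n.totient := by
  rw [← ZMod.card_units_eq_totient n, ← Finset.card_univ]
  refine Finset.card_bij' (fun z (hz : z ∈ univ.filter (fun z : ZMod n => IsUnit z)) =>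
      ((Finset.mem_filter.mp hz).2).unit)
    (fun (u : (ZMod n)ˣ) (_ : u ∈ univ) => (u : ZMod n)) (fun _ _ => mem_univ _)
    (fun u _ => by simp [u.isUnit]) (fun z hz => by simp) (fun u _ => Units.ext (by simp))

lemma card_nbhd (h2 : 2 ∣ n) (x : ZMod n) :
    #(univ.filter (fun y => (unitGraph n).Adj x y)) = n.totient := by
  have he : univ.filter (fun y => (unitGraph n).Adj x y)
      = univ.filter (fun y : ZMod n => IsUnit (x + y)) := by
    ext y
    simp only [mem_filter, mem_univ, true_and]
    constructor
    · exact fun h => h.2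
    · intro hu
      refine ⟨fun hxy => not_isUnit_add_self h2 x ?_, hu⟩
      rw [← hxy] at hu; exact hu
  rw [he, ← card_isUnit (n := n)]
  apply Finset.card_nbij' (fun y => x + y) (fun z => z - x)
  · intro a ha; simp only [mem_coe, mem_filter, mem_univ, true_and] at ha ⊢; exact ha
  · intro z hz; simp only [mem_coe, mem_filter, mem_univ, true_and] at hz ⊢
    convert hz using 2; ring
  · intro a _; simp
  · intro z _; simp

lemma nb_bound (h2 : 2 ∣ n) (x : ZMod n) (T C : Finset (ZMod n))
    (hT : ∀ z, (unitGraph n).Adj x z → z ∉ T → z ∈ C) :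
    n.totient - #C ≤ #(T.filter (fun z => (unitGraph n).Adj x z)) := by
  have hN := card_nbhd h2 x
  set N := univ.filter (fun y => (unitGraph n).Adj x y) with hNdef
  have hsplit : #(N.filter (fun z => z ∈ T)) + #(N.filter (fun z => z ∉ T)) = #N :=
    card_filter_add_card_filter_not _
  have hsub : N.filter (fun z => z ∉ T) ⊆ C := by
    intro z hz
    simp only [hNdef, mem_filter, mem_univ, true_and] at hz
    exact hT z hz.1 hz.2
  have h1 : #(N.filter (fun z => z ∉ T)) ≤ #C := card_le_card hsub
  have heq : T.filter (fun z => (unitGraph n).Adj x z) = N.filter (fun z => z ∈ T) := by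
    ext z
    simp only [hNdef, mem_filter, mem_univ, true_and]
    exact and_comm
  rw [heq]
  omega

lemma two_mul_card_even (h2 : 2 ∣ n) :
    2 * #(univ.filter (fun x : ZMod n => x.val % 2 = 0)) = n := by
  have hn2 : 2 ≤ n := Nat.le_of_dvd (Nat.pos_of_ne_zero (NeZero.ne n)) h2
  have hval1 : (1 : ZMod n).val = 1 := by
    rw [ZMod.val_one_eq_one_mod]; exact Nat.mod_eq_of_lt (by omega)
  have hflip : ∀ x : ZMod n, (x + 1).val % 2 = (x.val % 2 + 1) % 2 := by
    intro x
    rw [val_add_mod_two h2, hval1]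
    omega
  have hcard : #(univ.filter (fun x : ZMod n => x.val % 2 = 0))
      = #(univ.filter (fun x : ZMod n => ¬ x.val % 2 = 0)) := by
    apply Finset.card_nbij' (fun x => x + 1) (fun x => x - 1)
    · intro a ha
      simp only [mem_coe, mem_filter, mem_univ, true_and] at ha ⊢
      have := hflip a
      omega
    · intro a ha
      simp only [mem_coe, mem_filter, mem_univ, true_and] at ha ⊢
      have := hflip (a - 1)
      simp only [sub_add_cancel] at this
      omega
    · intro a _; ring
    · intro a _; ring
  have htot : #(univ.filter (fun x : ZMod n => x.val % 2 = 0))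
      + #(univ.filter (fun x : ZMod n => ¬ x.val % 2 = 0)) = n := by
    rw [card_filter_add_card_filter_not, card_univ, ZMod.card]
  omega

end Helpers

section Count
variable {V : Type*} [Fintype V] [DecidableEq V] (G : SimpleGraph V) [DecidableRel G.Adj]

lemma card_cross_fst (X W : Finset V) (c : ℕ)
    (h : ∀ x ∈ X, c ≤ #(W.filter (fun w => G.Adj x w))) :
    X.card * c ≤ #((X ×ˢ W).filter (fun e => G.Adj e.1 e.2)) := by
  classical
  rw [Finset.card_eq_sum_card_fiberwise
    (f := Prod.fst) (t := X) (fun e he => by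
      simp only [mem_coe, mem_filter, mem_product] at he; exact he.1.1)]
  calc X.card * c = ∑ _x ∈ X, c := by rw [Finset.sum_const, smul_eq_mul, mul_comm]
    _ ≤ _ := by
        apply Finset.sum_le_sum
        intro x hx
        refine le_trans (h x hx) (le_of_eq ?_)
        apply Finset.card_nbij (fun w => (x, w))
        · intro w hw
          simp only [mem_coe, mem_filter, mem_product] at hw ⊢
          exact ⟨⟨⟨hx, hw.1⟩, hw.2⟩, trivial⟩
        · intro a _ b _ hab; simpa using hab
        · intro e he
          simp only [Set.mem_image, mem_coe, mem_filter, mem_product] at he ⊢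
          obtain ⟨⟨⟨_, h2⟩, h3⟩, h4⟩ := he
          exact ⟨e.2, ⟨h2, h4 ▸ h3⟩, by rw [← h4]⟩

lemma card_cross_snd (X W : Finset V) (c : ℕ)
    (h : ∀ w ∈ W, c ≤ #(X.filter (fun x => G.Adj x w))) :
    W.card * c ≤ #((X ×ˢ W).filter (fun e => G.Adj e.1 e.2)) := by
  classical
  rw [Finset.card_eq_sum_card_fiberwise
    (f := Prod.snd) (t := W) (fun e he => by
      simp only [mem_coe, mem_filter, mem_product] at he; exact he.1.2)]
  calc W.card * c = ∑ _x ∈ W, c := by rw [Finset.sum_const, smul_eq_mul, mul_comm]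
    _ ≤ _ := by
        apply Finset.sum_le_sum
        intro w hw
        refine le_trans (h w hw) (le_of_eq ?_)
        apply Finset.card_nbij (fun x => (x, w))
        · intro x hx
          simp only [mem_coe, mem_filter, mem_product] at hx ⊢
          exact ⟨⟨⟨hx.1, hw⟩, hx.2⟩, trivial⟩
        · intro a _ b _ hab; simpa using hab
        · intro e he
          simp only [Set.mem_image, mem_coe, mem_filter, mem_product] at he ⊢
          obtain ⟨⟨⟨h1, _⟩, h3⟩, h4⟩ := he
          exact ⟨e.1, ⟨h1, h4 ▸ h3⟩, by rw [← h4]⟩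

end Count

lemma arith_cut (φ a₁ a₂ b₁ b₂ T₁ T₂ : ℕ)
    (ha : 1 ≤ a₁ + a₂) (hb : 1 ≤ b₁ + b₂) (hsum : a₁ + b₁ < 2 * φ)
    (h1 : a₁ * (φ - a₂) ≤ T₁) (h2 : b₂ * (φ - b₁) ≤ T₁)
    (h3 : a₂ * (φ - a₁) ≤ T₂) (h4 : b₁ * (φ - b₂) ≤ T₂) : φ ≤ T₁ + T₂ := by
  rcases Nat.eq_zero_or_pos a₁ with rfl | ha₁
  · have : a₂ * φ ≤ T₂ := by simpa using h3
    have : φ ≤ a₂ * φ := Nat.le_mul_of_pos_left _ (by omega)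
    omega
  rcases Nat.eq_zero_or_pos a₂ with rfl | ha₂
  · have : a₁ * φ ≤ T₁ := by simpa using h1
    have : φ ≤ a₁ * φ := Nat.le_mul_of_pos_left _ ha₁
    omega
  rcases Nat.eq_zero_or_pos b₁ with rfl | hb₁
  · have : b₂ * φ ≤ T₁ := by simpa using h2
    have : φ ≤ b₂ * φ := Nat.le_mul_of_pos_left _ (by omega)
    omega
  rcases Nat.eq_zero_or_pos b₂ with rfl | hb₂
  · have : b₁ * φ ≤ T₂ := by simpa using h4
    have : φ ≤ b₁ * φ := Nat.le_mul_of_pos_left _ hb₁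
    omega
  -- all positive
  rcases lt_or_ge a₁ φ with hA | hA
  · rcases lt_or_ge a₂ φ with hB | hB
    · -- a₁, a₂ < φ : T₁ + T₂ ≥ a₁(φ-a₂) + a₂(φ-a₁) ≥ (φ-a₂) + a₂ = φ
      have e1 : φ - a₂ ≤ a₁ * (φ - a₂) := Nat.le_mul_of_pos_left _ ha₁
      have e2 : a₂ ≤ a₂ * (φ - a₁) := Nat.le_mul_of_pos_right _ (by omega)
      omega
    · -- a₂ ≥ φ : T₂ ≥ a₂ * (φ - a₁) ≥ φ * 1
      have : φ * 1 ≤ a₂ * (φ - a₁) := Nat.mul_le_mul hB (by omega)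
      omega
  · have hb₁' : b₁ < φ := by omega
    rcases lt_or_ge b₂ φ with hB | hB
    · have e1 : φ - b₁ ≤ b₂ * (φ - b₁) := Nat.le_mul_of_pos_left _ hb₂
      have e2 : b₁ ≤ b₁ * (φ - b₂) := Nat.le_mul_of_pos_right _ (by omega)
      omega
    · have : φ * 1 ≤ b₂ * (φ - b₁) := Nat.mul_le_mul hB (by omega)
      omega

section Cut
variable {n : ℕ} [NeZero n]

lemma cut_bound (h2 : 2 ∣ n) (h4 : n < 4 * n.totient)
    (A : Finset (ZMod n)) (hA : A.Nonempty) (hA' : ∃ v, v ∉ A)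
    (S : Finset (Sym2 (ZMod n)))
    (hS : ∀ x ∈ A, ∀ y, y ∉ A → (unitGraph n).Adj x y → s(x, y) ∈ S) :
    n.totient ≤ #S := by
  set φ := n.totient with hφ
  set G := unitGraph n with hG
  set A₁ := A.filter (fun x : ZMod n => x.val % 2 = 0) with hA₁
  set A₂ := A.filter (fun x : ZMod n => ¬ x.val % 2 = 0) with hA₂
  set B₁ := (Aᶜ).filter (fun x : ZMod n => x.val % 2 = 0) with hB₁
  set B₂ := (Aᶜ).filter (fun x : ZMod n => ¬ x.val % 2 = 0) with hB₂
  set P₁ := (A₁ ×ˢ B₂).filter (fun e => G.Adj e.1 e.2) with hP₁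
  set P₂ := (A₂ ×ˢ B₁).filter (fun e => G.Adj e.1 e.2) with hP₂
  -- membership helpers
  have memA₁ : ∀ {z : ZMod n}, z ∈ A₁ ↔ z ∈ A ∧ z.val % 2 = 0 := by
    intro z; simp [hA₁]
  have memA₂ : ∀ {z : ZMod n}, z ∈ A₂ ↔ z ∈ A ∧ ¬ z.val % 2 = 0 := by
    intro z; simp [hA₂]
  have memB₁ : ∀ {z : ZMod n}, z ∈ B₁ ↔ z ∉ A ∧ z.val % 2 = 0 := by
    intro z; simp [hB₁]
  have memB₂ : ∀ {z : ZMod n}, z ∈ B₂ ↔ z ∉ A ∧ ¬ z.val % 2 = 0 := by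
    intro z; simp [hB₂]
  -- the four bounds
  have bd1 : #A₁ * (φ - #A₂) ≤ #P₁ := by
    apply card_cross_fst
    intro x hx
    apply nb_bound h2 x B₂ A₂
    intro z hz hzB
    have hpar := adj_parity h2 hz
    have hx' := memA₁.mp hx
    rw [memA₂]
    rw [memB₂] at hzB
    refine ⟨?_, by omega⟩
    by_contra hzA
    exact hzB ⟨hzA, by omega⟩
  have bd2 : #B₂ * (φ - #B₁) ≤ #P₁ := by
    apply card_cross_snd
    intro w hw
    have hcomm : A₁.filter (fun z => G.Adj z w) = A₁.filter (fun z => G.Adj w z) :=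
      Finset.filter_congr (fun z _ => ⟨fun h => h.symm, fun h => h.symm⟩)
    rw [hcomm]
    apply nb_bound h2 w A₁ B₁
    intro z hz hzA
    have hpar := adj_parity h2 hz
    have hw' := memB₂.mp hw
    rw [memB₁]
    rw [memA₁] at hzA
    refine ⟨?_, by omega⟩
    intro hzmem
    exact hzA ⟨hzmem, by omega⟩
  have bd3 : #A₂ * (φ - #A₁) ≤ #P₂ := by
    apply card_cross_fst
    intro x hx
    apply nb_bound h2 x B₁ A₁
    intro z hz hzB
    have hpar := adj_parity h2 hz
    have hx' := memA₂.mp hx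
    rw [memA₁]
    rw [memB₁] at hzB
    refine ⟨?_, by omega⟩
    by_contra hzA
    exact hzB ⟨hzA, by omega⟩
  have bd4 : #B₁ * (φ - #B₂) ≤ #P₂ := by
    apply card_cross_snd
    intro w hw
    have hcomm : A₂.filter (fun z => G.Adj z w) = A₂.filter (fun z => G.Adj w z) :=
      Finset.filter_congr (fun z _ => ⟨fun h => h.symm, fun h => h.symm⟩)
    rw [hcomm]
    apply nb_bound h2 w A₂ B₂
    intro z hz hzA
    have hpar := adj_parity h2 hz
    have hw' := memB₁.mp hw
    rw [memB₂]
    rw [memA₂] at hzA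
    refine ⟨?_, by omega⟩
    intro hzmem
    exact hzA ⟨hzmem, by omega⟩
  -- cardinality relations
  have cA : #A₁ + #A₂ = #A := card_filter_add_card_filter_not _
  have cB : #B₁ + #B₂ = #(Aᶜ) := card_filter_add_card_filter_not _
  have hApos : 1 ≤ #A₁ + #A₂ := by
    rw [cA]; exact hA.card_pos
  have hBpos : 1 ≤ #B₁ + #B₂ := by
    rw [cB]
    obtain ⟨v, hv⟩ := hA'
    exact Finset.card_pos.mpr ⟨v, Finset.mem_compl.mpr hv⟩
  have hEsplit : #A₁ + #B₁ = #(univ.filter (fun x : ZMod n => x.val % 2 = 0)) := by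
    have e1 : A₁ = (univ.filter (fun x : ZMod n => x.val % 2 = 0)).filter (fun z => z ∈ A) := by
      ext z; simp [hA₁, and_comm]
    have e2 : B₁ = (univ.filter (fun x : ZMod n => x.val % 2 = 0)).filter (fun z => z ∉ A) := by
      ext z; simp [hB₁, and_comm]
    rw [e1, e2]
    exact card_filter_add_card_filter_not _
  have hE : 2 * #(univ.filter (fun x : ZMod n => x.val % 2 = 0)) = n := two_mul_card_even h2
  have hsum : #A₁ + #B₁ < 2 * φ := by omega
  have hmain : φ ≤ #P₁ + #P₂ := arith_cut φ _ _ _ _ _ _ hApos hBpos hsum bd1 bd2 bd3 bd4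
  -- now map into S
  have hdisj : Disjoint P₁ P₂ := by
    rw [Finset.disjoint_left]
    intro e he1 he2
    simp only [hP₁, hP₂, mem_filter, mem_product] at he1 he2
    have q1 := memA₁.mp he1.1.1
    have q2 := memA₂.mp he2.1.1
    exact q2.2 q1.2
  have hunion : #P₁ + #P₂ = #(P₁ ∪ P₂) := (Finset.card_union_of_disjoint hdisj).symm
  set P := P₁ ∪ P₂ with hP
  have hmemP : ∀ e ∈ P, e.1 ∈ A ∧ e.2 ∉ A ∧ G.Adj e.1 e.2 := by
    intro e he
    rw [hP, Finset.mem_union] at he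
    rcases he with he | he <;> simp only [hP₁, hP₂, mem_filter, mem_product] at he
    · exact ⟨(memA₁.mp he.1.1).1, (memB₂.mp he.1.2).1, he.2⟩
    · exact ⟨(memA₂.mp he.1.1).1, (memB₁.mp he.1.2).1, he.2⟩
  have himg : P.image (fun e : ZMod n × ZMod n => s(e.1, e.2)) ⊆ S := by
    intro s hs
    rw [Finset.mem_image] at hs
    obtain ⟨e, he, rfl⟩ := hs
    obtain ⟨q1, q2, q3⟩ := hmemP e he
    exact hS e.1 q1 e.2 q2 q3
  have hinj : #(P.image (fun e : ZMod n × ZMod n => s(e.1, e.2))) = #P := by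
    apply Finset.card_image_of_injOn
    intro e he e' he' heq
    rw [Sym2.eq_iff] at heq
    rcases heq with ⟨h1, h2⟩ | ⟨h1, h2⟩
    · exact Prod.ext h1 h2
    · exfalso
      obtain ⟨q1, _, _⟩ := hmemP e he
      obtain ⟨_, q2', _⟩ := hmemP e' he'
      rw [h1] at q1
      exact q2' q1
  calc φ ≤ #P₁ + #P₂ := hmain
    _ = #P := hunion
    _ = #(P.image (fun e : ZMod n × ZMod n => s(e.1, e.2))) := hinj.symm
    _ ≤ #S := Finset.card_le_card himg

end Cut

section Final

lemma isolated_eq {V : Type*} {G : SimpleGraph V} {u : V} (h : ∀ w, ¬ G.Adj u w) {v : V}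
    (hr : G.Reachable u v) : u = v := by
  obtain ⟨p⟩ := hr
  cases p with
  | nil => rfl
  | cons ha _ => exact absurd ha (h _)

lemma nbhd_ncard {n : ℕ} [NeZero n] (h2 : 2 ∣ n) (v : ZMod n) :
    ((unitGraph n).neighborSet v).ncard = n.totient := by
  rw [Set.ncard_eq_toFinset_card']
  rw [← card_nbhd h2 v]
  congr 1
  ext z
  rw [Set.mem_toFinset]; simp [SimpleGraph.neighborSet]

lemma degree_eq {n : ℕ} [NeZero n] (h2 : 2 ∣ n) (v : ZMod n) :
    (unitGraph n).degree v = n.totient := by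
  rw [← SimpleGraph.card_neighborFinset_eq_degree, SimpleGraph.neighborFinset_eq_filter,
    card_nbhd h2 v]

theorem unitGraph_twoPowTimesOddPrimePow_card_edges_minDegree_edgeConnectivity (p m n₁ : ℕ)
    (hp : p.Prime) (hodd : Odd p) (hm : 0 < m) (hn₁ : 0 < n₁) :
    Nat.card (ZMod (2 ^ m * p ^ n₁)) = 2 ^ m * p ^ n₁ ∧
    (unitGraph (2 ^ m * p ^ n₁)).edgeSet.ncard =
      2 ^ (m - 1) * p ^ n₁ * Nat.totient (2 ^ m * p ^ n₁) ∧
    IsLeast (Set.range fun v : ZMod (2 ^ m * p ^ n₁) =>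
        ((unitGraph (2 ^ m * p ^ n₁)).neighborSet v).ncard)
      (Nat.totient (2 ^ m * p ^ n₁)) ∧
    ((∃ S : Finset (Sym2 (ZMod (2 ^ m * p ^ n₁))), ↑S ⊆ (unitGraph (2 ^ m * p ^ n₁)).edgeSet ∧
         S.card = Nat.totient (2 ^ m * p ^ n₁) ∧ ¬((unitGraph (2 ^ m * p ^ n₁)).deleteEdges ↑S).Connected) ∧
     (∀ S : Finset (Sym2 (ZMod (2 ^ m * p ^ n₁))), ↑S ⊆ (unitGraph (2 ^ m * p ^ n₁)).edgeSet →
         S.card < Nat.totient (2 ^ m * p ^ n₁) → ((unitGraph (2 ^ m * p ^ n₁)).deleteEdges ↑S).Connected)) := by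
  have hp3 : 3 ≤ p := by
    have h2le := hp.two_le
    obtain ⟨k, hk⟩ := hodd
    omega
  set n := 2 ^ m * p ^ n₁ with hn
  have hA : 1 ≤ 2 ^ (m - 1) := Nat.one_le_two_pow
  have hB : 1 ≤ p ^ (n₁ - 1) := Nat.one_le_pow _ _ (by omega)
  have e2 : 2 ^ m = 2 * 2 ^ (m - 1) := by
    have h : m - 1 + 1 = m := by omega
    conv_lhs => rw [← h]
    rw [pow_succ]
    ring
  have ep : p ^ n₁ = p ^ (n₁ - 1) * p := by
    have h : n₁ - 1 + 1 = n₁ := by omega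
    conv_lhs => rw [← h]
    rw [pow_succ]
  have hnpos : 0 < n := by positivity
  haveI : NeZero n := ⟨by omega⟩
  have h2 : 2 ∣ n := by
    rw [hn, e2]
    exact ⟨2 ^ (m - 1) * p ^ n₁, by ring⟩
  have htot : n.totient = 2 ^ (m - 1) * (p ^ (n₁ - 1) * (p - 1)) := by
    rw [hn, Nat.totient_mul (Nat.Coprime.pow m n₁ (Nat.coprime_two_left.mpr hodd)),
      Nat.totient_prime_pow hp hn₁, Nat.totient_prime_pow Nat.prime_two hm]
    norm_num
  have h4 : n < 4 * n.totient := by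
    rw [htot, hn, e2, ep]
    have key : 2 * p < 4 * (p - 1) := by omega
    have hpos : 0 < 2 ^ (m - 1) * p ^ (n₁ - 1) := by positivity
    calc 2 * 2 ^ (m - 1) * (p ^ (n₁ - 1) * p)
        = 2 ^ (m - 1) * p ^ (n₁ - 1) * (2 * p) := by ring
      _ < 2 ^ (m - 1) * p ^ (n₁ - 1) * (4 * (p - 1)) := by
          exact Nat.mul_lt_mul_of_le_of_lt (le_refl _) key hpos
      _ = 4 * (2 ^ (m - 1) * (p ^ (n₁ - 1) * (p - 1))) := by ring
  have hn2 : 2 ≤ n := by omega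
  haveI : Fact (1 < n) := ⟨by omega⟩
  refine ⟨by rw [Nat.card_zmod], ?_, ?_, ?_, ?_⟩
  · -- edge count
    have hsum : ∑ v : ZMod n, (unitGraph n).degree v = 2 * #(unitGraph n).edgeFinset :=
      SimpleGraph.sum_degrees_eq_twice_card_edges _
    have hsum2 : ∑ v : ZMod n, (unitGraph n).degree v = n * n.totient := by
      rw [Finset.sum_congr rfl (fun v _ => degree_eq h2 v), Finset.sum_const, card_univ,
        ZMod.card, smul_eq_mul]
    have hkey : 2 * (2 ^ (m - 1) * p ^ n₁ * n.totient) = 2 * #(unitGraph n).edgeFinset := by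
      rw [← hsum, hsum2, hn, e2]
      ring
    have hE : (unitGraph n).edgeSet.ncard = #(unitGraph n).edgeFinset := by
      rw [← SimpleGraph.coe_edgeFinset, Set.ncard_coe_finset]
    rw [hE]
    omega
  · -- IsLeast
    constructor
    · exact ⟨0, nbhd_ncard h2 0⟩
    · rintro x ⟨v, rfl⟩
      exact le_of_eq (nbhd_ncard h2 v).symm
  · -- existence of disconnecting set
    refine ⟨(unitGraph n).incidenceFinset 0, ?_, ?_, ?_⟩
    · intro e he
      rw [Finset.mem_coe, SimpleGraph.mem_incidenceFinset] at he
      exact (unitGraph n).incidenceSet_subset 0 he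
    · rw [SimpleGraph.card_incidenceFinset_eq_degree, degree_eq h2]
    · intro hc
      have hiso : ∀ w, ¬ ((unitGraph n).deleteEdges ↑((unitGraph n).incidenceFinset 0)).Adj 0 w := by
        intro w hw
        rw [SimpleGraph.deleteEdges_adj] at hw
        apply hw.2
        rw [Finset.mem_coe, SimpleGraph.mem_incidenceFinset]
        exact ((unitGraph n).mk'_mem_incidenceSet_left_iff).mpr hw.1
      have h01 : (0 : ZMod n) ≠ 1 := zero_ne_one
      exact h01 (isolated_eq hiso (hc.preconnected 0 1))
  · -- edge connectivity lower bound
    intro S hSsub hScard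
    rw [SimpleGraph.connected_iff]
    refine ⟨?_, inferInstance⟩
    intro u v
    by_contra hnr
    classical
    set A := univ.filter (fun x : ZMod n => ((unitGraph n).deleteEdges ↑S).Reachable u x) with hAdef
    have hu : u ∈ A := by
      rw [hAdef, mem_filter]
      exact ⟨mem_univ _, SimpleGraph.Reachable.refl u⟩
    have hv : v ∉ A := by
      rw [hAdef, mem_filter]
      rintro ⟨-, hr⟩
      exact hnr hr
    have hcut : ∀ x ∈ A, ∀ y, y ∉ A → (unitGraph n).Adj x y → s(x, y) ∈ S := by
      intro x hx y hy hadj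
      by_contra hnot
      apply hy
      rw [hAdef, mem_filter] at hx ⊢
      refine ⟨mem_univ _, hx.2.trans (SimpleGraph.Adj.reachable ?_)⟩
      rw [SimpleGraph.deleteEdges_adj]
      exact ⟨hadj, by simpa using hnot⟩
    have := cut_bound h2 h4 A ⟨u, hu⟩ ⟨v, hv⟩ S hcut
    omega

end Final
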